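/- For every θ ∈ (0, π) and all r₀, r > 0, one has arg(r₀ + r·exp(i(π − θ))) = f_θ(log r − log r₀). (Geometrically: in the kite formed by two circles of radii r₀ and r intersecting at exterior angle θ — the quadrilateral bounded by the two centers and the two intersection points — the angle of the kite at the center of the circle of radius r₀ equals 2·f_θ(log r − log r₀).) -/

import Mathlib

/-- The function `f_θ(x) = −arg(1 − exp(x + iθ))`, realizing the paper's
`f_θ(x) = (1/(2i))·log((1 − e^{x−iθ})/(1 − e^{x+iθ}))` with the branch of the
logarithm chosen so that `0 < f_θ < π`. -/
noncomputable def fAngle (θ x : ℝ) : ℝ :=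
  -Complex.arg (1 - Complex.exp (x + θ * Complex.I))

theorem fAngle_kite_angle (θ : ℝ) (hθ₀ : 0 < θ) (hθπ : θ < Real.pi)
    (r₀ r : ℝ) (hr₀ : 0 < r₀) (hr : 0 < r) :
    Complex.arg ((r₀ : ℂ) + (r : ℂ) * Complex.exp (Complex.I * ((Real.pi - θ : ℝ) : ℂ))) =
      fAngle θ (Real.log r - Real.log r₀) := by
  set x : ℝ := Real.log r - Real.log r₀ with hxdef
  have hx : (Real.exp x : ℂ) = (r : ℂ) / (r₀ : ℂ) := by
    rw [hxdef, Real.exp_sub, Real.exp_log hr, Real.exp_log hr₀]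
    push_cast
    ring
  set w : ℂ := 1 - Complex.exp ((x : ℂ) + θ * Complex.I) with hw
  have him : w.im < 0 := by
    have : w.im = -(Real.exp x * Real.sin θ) := by
      simp [hw, Complex.exp_add, Complex.exp_mul_I, Complex.exp_ofReal_re,
        Complex.exp_ofReal_im, Complex.add_im, Complex.mul_im, Complex.sin_ofReal_re]
    rw [this]
    have := Real.sin_pos_of_pos_of_lt_pi hθ₀ hθπ
    nlinarith [Real.exp_pos x]
  have hkey : (r₀ : ℂ) + (r : ℂ) * Complex.exp (Complex.I * ((Real.pi - θ : ℝ) : ℂ)) =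
      (r₀ : ℂ) * (starRingEnd ℂ) w := by
    have h1 : (starRingEnd ℂ) w = 1 - Complex.exp ((x : ℂ) - θ * Complex.I) := by
      rw [hw, map_sub, map_one, ← Complex.exp_conj]
      congr 1
      simp [Complex.conj_ofReal]
      ring
    rw [h1]
    have h2 : Complex.exp (Complex.I * ((Real.pi - θ : ℝ) : ℂ)) =
        -Complex.exp (-(θ * Complex.I)) := by
      push_cast
      rw [show Complex.I * ((Real.pi : ℂ) - θ) = (Real.pi : ℂ) * Complex.I + -(θ * Complex.I) by ring,
        Complex.exp_add, Complex.exp_pi_mul_I]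
      ring
    rw [h2, Complex.exp_sub, Complex.exp_neg]
    have hr₀' : (r₀ : ℂ) ≠ 0 := by exact_mod_cast hr₀.ne'
    have hexp : Complex.exp (x : ℂ) = (r : ℂ) / (r₀ : ℂ) := by
      rw [← Complex.ofReal_exp]
      exact hx
    field_simp [hexp]
    rw [hexp]
    field_simp
    ring
  rw [hkey, Complex.arg_real_mul _ hr₀, Complex.arg_conj]
  have hargneg : w.arg < 0 := Complex.arg_neg_iff.mpr him
  rw [if_neg (by linarith [Real.pi_pos])]
  rfl
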